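/- Let u ∈ ℤ^n be nonnegative and suppose there exists W : Fin n → Fin n → ℝ≥0, supported on the edge set E of a digraph G, with Σ_j W_{ij} = Σ_k W_{ki} = u_i for all i (sums restricted to edges of G). Then there exists an integer-valued V : Fin n → Fin n → ℕ, also supported on E, with Σ_j V_{ij} = Σ_k V_{ki} = u_i for all i. -/

import Mathlib

open scoped NNReal

private lemma fract_facts' {r : ℝ} (h0 : 0 ≤ r) (hf : ¬ ∃ m : ℕ, r = m) :
    0 < Int.fract r ∧ Int.fract r ≤ r ∧ ∃ m : ℕ, r - Int.fract r = m := by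
  have hfl : (0:ℝ) ≤ (⌊r⌋:ℝ) := by exact_mod_cast Int.floor_nonneg.mpr h0
  have hfd : Int.fract r = r - ⌊r⌋ := rfl
  have heq : ((⌊r⌋.toNat : ℕ) : ℝ) = (⌊r⌋ : ℝ) := by
    norm_cast
    exact Int.toNat_of_nonneg (Int.floor_nonneg.mpr h0)
  refine ⟨?_, by rw [hfd]; linarith, ⟨⌊r⌋.toNat, by rw [hfd, heq]; ring⟩⟩
  rcases eq_or_lt_of_le (Int.fract_nonneg r) with h | h
  · exact absurd ⟨⌊r⌋.toNat, by rw [heq]; have := hfd; rw [← h] at this; linarith⟩ hf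
  · exact h

private lemma exists_other_frac' {m : ℕ} (y : Fin m → ℝ) (hy : ∀ i, 0 ≤ y i) (u : ℕ)
    (hsum : ∑ i, y i = u) {i : Fin m} (hf : ¬ ∃ k : ℕ, y i = k) :
    ∃ i', i' ≠ i ∧ ¬ ∃ k : ℕ, y i' = k := by
  by_contra h
  push_neg at h
  apply hf
  have hchoice : ∀ i', ∃ k : ℕ, i' ≠ i → y i' = k := by
    intro i'
    by_cases hi : i' = i
    · exact ⟨0, fun h' => absurd hi h'⟩
    · obtain ⟨k, hk⟩ := h i' hi
      exact ⟨k, fun _ => hk⟩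
  choose f hfspec using hchoice
  have hrest : ∑ i' ∈ Finset.univ.erase i, y i'
      = ((∑ i' ∈ Finset.univ.erase i, f i' : ℕ) : ℝ) := by
    push_cast
    exact Finset.sum_congr rfl fun i' hi' => hfspec i' (Finset.ne_of_mem_erase hi')
  have hsplit : y i + ∑ i' ∈ Finset.univ.erase i, y i' = u := by
    rw [Finset.add_sum_erase _ _ (Finset.mem_univ i)]
    exact hsum
  set S := ∑ i' ∈ Finset.univ.erase i, f i' with hS
  rw [hrest] at hsplit
  have hSle : S ≤ u := by
    have h1 : (S : ℝ) ≤ (u : ℝ) := by linarith [hy i]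
    exact_mod_cast h1
  refine ⟨u - S, ?_⟩
  have : ((u - S : ℕ) : ℝ) = (u:ℝ) - (S:ℝ) := by rw [Nat.cast_sub hSle]
  rw [this]
  linarith

private lemma telescope' (f : ℕ → ℝ) (a b : ℕ) (hab : a ≤ b) :
    ∑ k ∈ Finset.Ico a b, (f (k+1) - f k) = f b - f a := by
  rw [Finset.sum_Ico_eq_sum_range]
  have h := Finset.sum_range_sub (fun m => f (a + m)) (b - a)
  simp only [add_zero, ← add_assoc] at h
  rw [show a + (b - a) = b by omega] at h
  convert h using 2

section Main
variable {n : ℕ}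
open Finset
open scoped Classical

private lemma improve_step (E : Fin n → Fin n → Prop) (u : Fin n → ℕ)
    (x : Fin n → Fin n → ℝ)
    (hx : ∀ i j, 0 ≤ x i j)
    (hrow : ∀ i, ∑ j, x i j = u i)
    (hcol : ∀ i, ∑ k, x k i = u i)
    (Fr : Finset (Fin n × Fin n))
    (hFrP : ∀ p : Fin n × Fin n, p ∈ Fr ↔ ¬ ∃ m : ℕ, x p.1 p.2 = m)
    (I J : ℕ → Fin n)
    (hIJ : ∀ k, (I k, J k) ∈ Fr)
    (hstp : ∀ k, I (k+1) ≠ I k ∧ (I (k+1), J k) ∈ Fr ∧ J (k+1) ≠ J k)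
    (a b : ℕ) (hIab : I a = I b)
    (hdist : ∀ k l, k < b → l < b → I k = I l → k = l)
    (hb2 : a + 1 < b) (hsupp : ∀ i j, ¬ E i j → x i j = 0) :
    ∃ x' : Fin n → Fin n → ℝ,
      (∀ i j, 0 ≤ x' i j) ∧ (∀ i j, ¬ E i j → x' i j = 0) ∧
      (∀ i, ∑ j, x' i j = u i) ∧ (∀ i, ∑ k, x' k i = u i) ∧
      (univ.filter (fun p : Fin n × Fin n => ¬ ∃ m : ℕ, x' p.1 p.2 = m)) ⊂ Fr := by
  classical
  set S := Finset.Ico a b with hSdef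
  set Pf : Fin n → Fin n → ℝ :=
    fun i j => ∑ k ∈ S, (if i = I (k+1) then (1:ℝ) else 0) * (if j = J k then 1 else 0) with hPfdef
  set Mf : Fin n → Fin n → ℝ :=
    fun i j => ∑ k ∈ S, (if i = I k then (1:ℝ) else 0) * (if j = J k then 1 else 0) with hMfdef
  have hPnn : ∀ i j, 0 ≤ Pf i j := fun i j => Finset.sum_nonneg fun k _ => by positivity
  have hPfrac : ∀ i j, Pf i j ≠ 0 → (i, j) ∈ Fr := by
    intro i j h
    obtain ⟨k, hkS, hk⟩ := Finset.exists_ne_zero_of_sum_ne_zero h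
    have h1 : i = I (k+1) ∧ j = J k := by
      by_contra hc
      rcases not_and_or.mp hc with h' | h' <;> simp [h'] at hk
    rw [h1.1, h1.2]; exact (hstp k).2.1
  have hMfrac : ∀ i j, Mf i j ≠ 0 → (i, j) ∈ Fr := by
    intro i j h
    obtain ⟨k, hkS, hk⟩ := Finset.exists_ne_zero_of_sum_ne_zero h
    have h1 : i = I k ∧ j = J k := by
      by_contra hc
      rcases not_and_or.mp hc with h' | h' <;> simp [h'] at hk
    rw [h1.1, h1.2]; exact hIJ k
  have hMval : ∀ k ∈ S, Mf (I k) (J k) = 1 := by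
    intro k hkS
    simp only [hMfdef]
    rw [Finset.sum_eq_single_of_mem k hkS]
    · simp
    · intro l hlS hlk
      have h' : I k ≠ I l := fun he =>
        hlk ((hdist l k (mem_Ico.mp hlS).2 (mem_Ico.mp hkS).2 he.symm))
      simp [h']
  have hMcases : ∀ i j, Mf i j = 0 ∨ ∃ k ∈ S, i = I k ∧ j = J k := by
    intro i j
    by_cases hex : ∃ k ∈ S, i = I k ∧ j = J k
    · exact Or.inr hex
    · left
      apply Finset.sum_eq_zero
      intro k hk
      have hne : ¬(i = I k ∧ j = J k) := fun hc => hex ⟨k, hk, hc⟩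
      rcases not_and_or.mp hne with h' | h' <;> simp [h']
  have hP1 : ∀ i j, (∃ l ∈ S, i = I (l+1) ∧ j = J l) → 1 ≤ Pf i j := by
    rintro i j ⟨l, hlS, h1, h2⟩
    have hs := Finset.single_le_sum (f := fun k =>
      (if i = I (k+1) then (1:ℝ) else 0) * (if j = J k then 1 else 0))
      (fun k _ => by positivity) hlS
    simp only [hPfdef]
    refine le_trans ?_ hs
    simp [h1, h2]
  have hPzero' : ∀ i j, (∀ l ∈ S, ¬(i = I (l+1) ∧ j = J l)) → Pf i j = 0 := by
    intro i j hall
    apply Finset.sum_eq_zero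
    intro k hk
    rcases not_and_or.mp (hall k hk) with h' | h' <;> simp [h']
  set K := S.filter (fun k => ∀ l ∈ S, ¬(I k = I (l+1) ∧ J k = J l)) with hKdef
  have hPzeroK : ∀ k ∈ K, Pf (I k) (J k) = 0 := by
    intro k hkK
    exact hPzero' _ _ (mem_filter.mp hkK).2
  have hKa1 : a + 1 ∈ K := by
    rw [hKdef, mem_filter]
    refine ⟨mem_Ico.mpr ⟨by omega, hb2⟩, ?_⟩
    rintro l hl ⟨h1, h2⟩
    have hlb : l < b := (mem_Ico.mp hl).2
    have hla : a ≤ l := (mem_Ico.mp hl).1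
    rcases Nat.lt_or_ge (l+1) b with h | h
    · have : a + 1 = l + 1 := hdist (a+1) (l+1) hb2 h h1
      have hla' : l = a := by omega
      rw [hla'] at h2
      exact (hstp a).2.2 h2
    · have hlb' : l + 1 = b := by omega
      rw [hlb'] at h1
      exact (hstp a).1 (h1.trans hIab.symm)
  -- choose the pivot cell
  obtain ⟨k₀, hk₀K, hk₀min⟩ := Finset.exists_min_image K
    (fun k => Int.fract (x (I k) (J k))) ⟨a+1, hKa1⟩
  have hk₀S : k₀ ∈ S := (mem_filter.mp hk₀K).1
  set δ := Int.fract (x (I k₀) (J k₀)) with hδdef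
  have hfr₀ := fract_facts' (hx (I k₀) (J k₀)) ((hFrP _).mp (hIJ k₀))
  have hδpos : 0 < δ := hfr₀.1
  set x' : Fin n → Fin n → ℝ := fun i j => x i j + δ * Pf i j - δ * Mf i j with hx'def
  -- row and column sums of Pf and Mf
  have hPsum : ∀ i, ∑ j, Pf i j = ∑ k ∈ S, (if i = I (k+1) then (1:ℝ) else 0) := by
    intro i
    simp only [hPfdef]
    rw [Finset.sum_comm]
    refine Finset.sum_congr rfl fun k _ => ?_
    rw [← Finset.mul_sum]
    simp
  have hMsum : ∀ i, ∑ j, Mf i j = ∑ k ∈ S, (if i = I k then (1:ℝ) else 0) := by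
    intro i
    simp only [hMfdef]
    rw [Finset.sum_comm]
    refine Finset.sum_congr rfl fun k _ => ?_
    rw [← Finset.mul_sum]
    simp
  have hPcol : ∀ j, ∑ i, Pf i j = ∑ k ∈ S, (if j = J k then (1:ℝ) else 0) := by
    intro j
    simp only [hPfdef]
    rw [Finset.sum_comm]
    refine Finset.sum_congr rfl fun k _ => ?_
    rw [← Finset.sum_mul]
    simp
  have hMcol : ∀ j, ∑ i, Mf i j = ∑ k ∈ S, (if j = J k then (1:ℝ) else 0) := by
    intro j
    simp only [hMfdef]
    rw [Finset.sum_comm]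
    refine Finset.sum_congr rfl fun k _ => ?_
    rw [← Finset.sum_mul]
    simp
  have hx'row : ∀ i, ∑ j, x' i j = u i := by
    intro i
    have hsplit : ∑ j, x' i j = (∑ j, x i j) + δ * (∑ j, Pf i j) - δ * (∑ j, Mf i j) := by
      simp only [hx'def]
      rw [Finset.sum_sub_distrib, Finset.sum_add_distrib, Finset.mul_sum, Finset.mul_sum]
    have htel := telescope' (fun k => if i = I k then (1:ℝ) else 0) a b (by omega)
    rw [Finset.sum_sub_distrib] at htel
    beta_reduce at htel
    have hfb : (if i = I b then (1:ℝ) else 0) = (if i = I a then (1:ℝ) else 0) := by rw [hIab]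
    rw [hfb] at htel
    have hPM : (∑ k ∈ Finset.Ico a b, if i = I (k+1) then (1:ℝ) else 0)
        = ∑ k ∈ Finset.Ico a b, if i = I k then (1:ℝ) else 0 := by linarith [htel]
    rw [hsplit, hrow i, hPsum, hMsum, hSdef, hPM]
    ring
  have hx'col : ∀ j, ∑ k, x' k j = u j := by
    intro j
    have hsplit : ∑ i, x' i j = (∑ i, x i j) + δ * (∑ i, Pf i j) - δ * (∑ i, Mf i j) := by
      simp only [hx'def]
      rw [Finset.sum_sub_distrib, Finset.sum_add_distrib, Finset.mul_sum, Finset.mul_sum]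
    rw [hsplit, hcol j, hPcol, hMcol]
    ring
  have hx'nn : ∀ i j, 0 ≤ x' i j := by
    intro i j
    rcases hMcases i j with h0 | ⟨k, hkS, h1, h2⟩
    · simp only [hx'def, h0]
      have := mul_nonneg hδpos.le (hPnn i j)
      linarith [hx i j]
    · subst h1; subst h2
      have hM1 : Mf (I k) (J k) = 1 := hMval k hkS
      by_cases hex : ∃ l ∈ S, I k = I (l+1) ∧ J k = J l
      · have h1P := hP1 _ _ hex
        simp only [hx'def, hM1]
        have := mul_nonneg hδpos.le (sub_nonneg.mpr h1P)
        linarith [hx (I k) (J k)]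
      · have hP0 : Pf (I k) (J k) = 0 := hPzero' _ _ (fun l hl hc => hex ⟨l, hl, hc⟩)
        have hkK : k ∈ K := by
          rw [hKdef, mem_filter]
          exact ⟨hkS, fun l hl hc => hex ⟨l, hl, hc⟩⟩
        have hδle : δ ≤ Int.fract (x (I k) (J k)) := hk₀min k hkK
        have hfrk := fract_facts' (hx (I k) (J k)) ((hFrP _).mp (hIJ k))
        simp only [hx'def, hP0, hM1]
        linarith [hfrk.2.1]
  have hx'supp : ∀ i j, ¬ E i j → x' i j = 0 := by
    intro i j hE
    have hx0 : x i j = 0 := hsupp i j hE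
    have hnotFr : (i, j) ∉ Fr := by
      rw [hFrP]
      intro h
      exact h ⟨0, by simp [hx0]⟩
    have hP0 : Pf i j = 0 := by
      by_contra h; exact hnotFr (hPfrac i j h)
    have hM0 : Mf i j = 0 := by
      by_contra h; exact hnotFr (hMfrac i j h)
    simp [hx'def, hx0, hP0, hM0]
  refine ⟨x', hx'nn, hx'supp, hx'row, hx'col, ?_, ?_⟩
  · -- subset
    intro p hp
    by_contra hnp
    have hnat : ∃ m : ℕ, x p.1 p.2 = m := not_not.mp ((not_iff_not.mpr (hFrP p)).mp hnp)
    have hP0 : Pf p.1 p.2 = 0 := by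
      by_contra h
      exact hnp (by simpa using hPfrac p.1 p.2 h)
    have hM0 : Mf p.1 p.2 = 0 := by
      by_contra h
      exact hnp (by simpa using hMfrac p.1 p.2 h)
    have hcontra : ¬ ∃ m : ℕ, x' p.1 p.2 = m := by
      simpa using (mem_filter.mp hp).2
    apply hcontra
    obtain ⟨m, hm⟩ := hnat
    exact ⟨m, by simp [hx'def, hP0, hM0, hm]⟩
  · -- not superset : pivot cell leaves
    intro hle
    have hk₀Fr : (I k₀, J k₀) ∈ Fr := hIJ k₀
    have hmem := hle hk₀Fr
    have hnot : ¬ ∃ m : ℕ, x' (I k₀) (J k₀) = m := by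
      simpa using (mem_filter.mp hmem).2
    apply hnot
    obtain ⟨m, hm⟩ := hfr₀.2.2
    refine ⟨m, ?_⟩
    have hP0 : Pf (I k₀) (J k₀) = 0 := hPzeroK k₀ hk₀K
    have hM1 : Mf (I k₀) (J k₀) = 1 := hMval k₀ hk₀S
    simp only [hx'def, hP0, hM1]
    rw [← hm, hδdef]
    ring

private lemma allnat (E : Fin n → Fin n → Prop) (u : Fin n → ℕ)
    (x : Fin n → Fin n → ℝ)
    (hnat : ∀ i j, ∃ m : ℕ, x i j = m)
    (hsupp : ∀ i j, ¬ E i j → x i j = 0)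
    (hrow : ∀ i, ∑ j, x i j = u i)
    (hcol : ∀ i, ∑ k, x k i = u i) :
    ∃ V : Fin n → Fin n → ℕ, (∀ i j, ¬ E i j → V i j = 0) ∧
      (∀ i, ∑ j, V i j = u i) ∧ (∀ i, ∑ k, V k i = u i) := by
  choose V hV using hnat
  refine ⟨V, ?_, ?_, ?_⟩
  · intro i j hE
    have h0 := hsupp i j hE
    rw [hV i j] at h0
    exact_mod_cast h0
  · intro i
    have h1 : ((∑ j, V i j : ℕ) : ℝ) = ((u i : ℕ) : ℝ) := by
      push_cast
      rw [← hrow i]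
      exact Finset.sum_congr rfl fun j _ => (hV i j).symm
    exact_mod_cast h1
  · intro i
    have h1 : ((∑ k, V k i : ℕ) : ℝ) = ((u i : ℕ) : ℝ) := by
      push_cast
      rw [← hcol i]
      exact Finset.sum_congr rfl fun k _ => (hV k i).symm
    exact_mod_cast h1

private lemma key (E : Fin n → Fin n → Prop) (u : Fin n → ℕ) :
    ∀ N (x : Fin n → Fin n → ℝ),
    (univ.filter (fun p : Fin n × Fin n => ¬ ∃ m : ℕ, x p.1 p.2 = m)).card ≤ N →
    (∀ i j, 0 ≤ x i j) →
    (∀ i j, ¬ E i j → x i j = 0) →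
    (∀ i, ∑ j, x i j = u i) →
    (∀ i, ∑ k, x k i = u i) →
    ∃ V : Fin n → Fin n → ℕ, (∀ i j, ¬ E i j → V i j = 0) ∧
      (∀ i, ∑ j, V i j = u i) ∧ (∀ i, ∑ k, V k i = u i) := by
  intro N
  induction N with
  | zero =>
    intro x hcard hx hsupp hrow hcol
    refine allnat E u x ?_ hsupp hrow hcol
    intro i j
    by_contra h
    have hmem : ((i,j) : Fin n × Fin n) ∈ univ.filter
        (fun p : Fin n × Fin n => ¬ ∃ m : ℕ, x p.1 p.2 = m) :=
      Finset.mem_filter.mpr ⟨Finset.mem_univ _, h⟩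
    have hemp : (univ.filter (fun p : Fin n × Fin n => ¬ ∃ m : ℕ, x p.1 p.2 = m)) = ∅ :=
      Finset.card_eq_zero.mp (Nat.le_zero.mp hcard)
    rw [hemp] at hmem
    exact Finset.notMem_empty _ hmem
  | succ N ih =>
  intro x hcard hx hsupp hrow hcol
  set Fr := univ.filter (fun p : Fin n × Fin n => ¬ ∃ m : ℕ, x p.1 p.2 = m) with hFr
  have hFrP : ∀ p : Fin n × Fin n, p ∈ Fr ↔ ¬ ∃ m : ℕ, x p.1 p.2 = m := by
    intro p; simp [hFr]
  by_cases hemp : Fr = ∅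
  · refine allnat E u x ?_ hsupp hrow hcol
    intro i j
    by_contra h
    have hmem : (i,j) ∈ Fr := (hFrP (i,j)).mpr h
    simp [hemp] at hmem
  · obtain ⟨p₀, hp₀⟩ := Finset.nonempty_iff_ne_empty.mpr hemp
    obtain ⟨I, J, hIJ, hstp⟩ : ∃ I : ℕ → Fin n, ∃ J : ℕ → Fin n,
        (∀ k, (I k, J k) ∈ Fr) ∧
        (∀ k, I (k+1) ≠ I k ∧ (I (k+1), J k) ∈ Fr ∧ J (k+1) ≠ J k) := by
      have hstep1 : ∀ q : {p : Fin n × Fin n // p ∈ Fr}, ∃ r : {p : Fin n × Fin n // p ∈ Fr},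
          r.1.1 ≠ q.1.1 ∧ (r.1.1, q.1.2) ∈ Fr ∧ r.1.2 ≠ q.1.2 := by
        intro q
        have hq : ¬ ∃ m : ℕ, x q.1.1 q.1.2 = m := (hFrP q.1).mp q.2
        obtain ⟨i', hi'ne, hi'f⟩ := exists_other_frac' (fun k => x k q.1.2)
          (fun k => hx k q.1.2) (u q.1.2) (hcol q.1.2) hq
        obtain ⟨j', hj'ne, hj'f⟩ := exists_other_frac' (fun j => x i' j)
          (fun j => hx i' j) (u i') (hrow i') hi'f
        exact ⟨⟨(i', j'), (hFrP _).mpr hj'f⟩, hi'ne, (hFrP _).mpr hi'f, hj'ne⟩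
      choose G hG1 hG2 hG3 using hstep1
      refine ⟨fun k => (G^[k] ⟨p₀, hp₀⟩).1.1, fun k => (G^[k] ⟨p₀, hp₀⟩).1.2,
        fun k => by simp, fun k => ?_⟩
      simp only [Function.iterate_succ_apply']
      exact ⟨hG1 _, hG2 _, hG3 _⟩
    have hP : ∃ b, ∃ a, a < b ∧ I a = I b := by
      obtain ⟨c, d, hne, he⟩ := Finite.exists_ne_map_eq_of_infinite I
      rcases hne.lt_or_gt with h | h
      · exact ⟨d, c, h, he⟩
      · exact ⟨c, d, h, he.symm⟩
    set b := Nat.find hP with hb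
    obtain ⟨a, hab, hIab⟩ := Nat.find_spec hP
    have hmin : ∀ c, c < b → ¬ ∃ a', a' < c ∧ I a' = I c := fun c hc => Nat.find_min hP hc
    have hdist : ∀ k l, k < b → l < b → I k = I l → k = l := by
      intro k l hk hl he
      by_contra hne
      rcases Nat.lt_or_ge k l with h | h
      · exact hmin l hl ⟨k, h, he⟩
      · exact hmin k hk ⟨l, by omega, he.symm⟩
    have hb2 : a + 1 < b := by
      rcases Nat.lt_or_ge (a+1) b with h | h
      · exact h
      · exfalso
        have : b = a + 1 := by omega
        exact (hstp a).1 (this ▸ hIab.symm)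
    obtain ⟨x', hx'nn, hx'supp, hx'row, hx'col, hss⟩ :=
      improve_step E u x hx hrow hcol Fr hFrP I J hIJ hstp a b hIab hdist hb2 hsupp
    have hlt : (univ.filter (fun p : Fin n × Fin n => ¬ ∃ m : ℕ, x' p.1 p.2 = m)).card
        < Fr.card := Finset.card_lt_card hss
    exact ih x' (by omega) hx'nn hx'supp hx'row hx'col

end Main

theorem integer_feasibility {n : ℕ} (E : Fin n → Fin n → Prop)
    (u : Fin n → ℕ)
    (W : Fin n → Fin n → ℝ≥0)
    (hsupp : ∀ i j, ¬ E i j → W i j = 0)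
    (hrow : ∀ i, ∑ j, W i j = (u i : ℝ≥0))
    (hcol : ∀ i, ∑ k, W k i = (u i : ℝ≥0)) :
    ∃ V : Fin n → Fin n → ℕ,
      (∀ i j, ¬ E i j → V i j = 0) ∧
      (∀ i, ∑ j, V i j = u i) ∧
      (∀ i, ∑ k, V k i = u i) := by
  classical
  set x : Fin n → Fin n → ℝ := fun i j => (W i j : ℝ) with hxdef
  have hx : ∀ i j, 0 ≤ x i j := fun i j => (W i j).coe_nonneg
  have hsupp' : ∀ i j, ¬ E i j → x i j = 0 := by
    intro i j hE
    simp [hxdef, hsupp i j hE]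
  have hrow' : ∀ i, ∑ j, x i j = u i := by
    intro i
    have := congrArg (fun r : ℝ≥0 => (r : ℝ)) (hrow i)
    push_cast at this
    simpa [hxdef] using this
  have hcol' : ∀ i, ∑ k, x k i = u i := by
    intro i
    have := congrArg (fun r : ℝ≥0 => (r : ℝ)) (hcol i)
    push_cast at this
    simpa [hxdef] using this
  exact key E u _ x le_rfl hx hsupp' hrow' hcol'
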